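/- If z ∼ MVST(μ, R, Δ, ν) is multivariate skew-t distributed with density 2^n t(z; μ, Ω, ν) T(z̄; 0, L, ν+n) where Ω = R + ΔΔᵀ, L = I − ΔᵀΩ^{-1}Δ, and z̄ = ΔᵀΩ^{-1}(z−μ)·√((ν+n)/(ν+(z−μ)ᵀΩ^{-1}(z−μ))), then for any invertible matrix A ∈ ℝ^{n×n}, the random vector Az is distributed as MVST(Aμ, ARAᵀ, AΔ, ν). -/
import Mathlib

open MeasureTheory Real Matrix

noncomputable def mvtPDF {n : ℕ} (μ : Fin n → ℝ) (S : Matrix (Fin n) (Fin n) ℝ)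
    (ν : ℝ) (z : Fin n → ℝ) : ℝ :=
  Real.Gamma ((ν + n) / 2) /
      ((ν * Real.pi) ^ ((n : ℝ) / 2) * Real.sqrt S.det * Real.Gamma (ν / 2)) *
    (1 + (z - μ) ⬝ᵥ (S⁻¹ *ᵥ (z - μ)) / ν) ^ (-((ν + n) / 2))

noncomputable def mvtCDF {n : ℕ} (μ : Fin n → ℝ) (S : Matrix (Fin n) (Fin n) ℝ)
    (ν : ℝ) (z : Fin n → ℝ) : ℝ :=
  ∫ w in Set.Iic z, mvtPDF μ S ν w

noncomputable def mvstPDF {n : ℕ} (μ : Fin n → ℝ) (R Δ : Matrix (Fin n) (Fin n) ℝ)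
    (ν : ℝ) (z : Fin n → ℝ) : ℝ :=
  2 ^ n * mvtPDF μ (R + Δ * Δᵀ) ν z *
    mvtCDF 0 (1 - Δᵀ * (R + Δ * Δᵀ)⁻¹ * Δ) (ν + n)
      (Real.sqrt ((ν + n) / (ν + (z - μ) ⬝ᵥ ((R + Δ * Δᵀ)⁻¹ *ᵥ (z - μ)))) •
        (Δᵀ *ᵥ ((R + Δ * Δᵀ)⁻¹ *ᵥ (z - μ))))

/-- affine invariance of the multivariate skew t-distribution: if
`z ∼ MVST(μ, R, Δ, ν)` and `A` is invertible then `Az ∼ MVST(Aμ, ARAᵀ, AΔ, ν)`,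
expressed through the change-of-variables formula for densities. -/
theorem stmt_10 {n : ℕ} (μ : Fin n → ℝ) (R Δ : Matrix (Fin n) (Fin n) ℝ)
    (hR : R.PosDef) (ν : ℝ) (hν : 0 < ν)
    (A : Matrix (Fin n) (Fin n) ℝ) (hA : IsUnit A.det) :
    ∀ y : Fin n → ℝ,
      mvstPDF (A *ᵥ μ) (A * R * Aᵀ) (A * Δ) ν y =
        |A.det|⁻¹ * mvstPDF μ R Δ ν (A⁻¹ *ᵥ y) := by
  intro y
  set Ω := R + Δ * Δᵀ with hΩdef
  set z := A⁻¹ *ᵥ y with hz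
  have hAT : IsUnit Aᵀ.det := by rwa [Matrix.det_transpose]
  have hy : y - A *ᵥ μ = A *ᵥ (z - μ) := by
    rw [Matrix.mulVec_sub, hz, Matrix.mulVec_mulVec, Matrix.mul_nonsing_inv _ hA,
      Matrix.one_mulVec]
  have hΩ' : A * R * Aᵀ + (A * Δ) * (A * Δ)ᵀ = A * Ω * Aᵀ := by
    rw [Matrix.transpose_mul, hΩdef]; noncomm_ring
  have hΩinv : (A * Ω * Aᵀ)⁻¹ = (Aᵀ)⁻¹ * Ω⁻¹ * A⁻¹ := by
    rw [Matrix.mul_inv_rev, Matrix.mul_inv_rev, mul_assoc]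
  -- quadratic-form invariance
  have hvec : (A * Ω * Aᵀ)⁻¹ *ᵥ (y - A *ᵥ μ) = (Aᵀ)⁻¹ *ᵥ (Ω⁻¹ *ᵥ (z - μ)) := by
    rw [hΩinv, hy, Matrix.mulVec_mulVec, Matrix.mulVec_mulVec, mul_assoc,
      Matrix.nonsing_inv_mul _ hA, mul_one, ← Matrix.mulVec_mulVec]
  have hquad : (y - A *ᵥ μ) ⬝ᵥ ((A * Ω * Aᵀ)⁻¹ *ᵥ (y - A *ᵥ μ))
      = (z - μ) ⬝ᵥ (Ω⁻¹ *ᵥ (z - μ)) := by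
    rw [hvec, hy, ← Matrix.vecMul_transpose, Matrix.mulVec_mulVec,
      Matrix.dotProduct_mulVec, Matrix.vecMul_vecMul, ← mul_assoc,
      Matrix.mul_nonsing_inv _ hAT, one_mul, ← Matrix.dotProduct_mulVec]
  have hskew : (A * Δ)ᵀ *ᵥ ((A * Ω * Aᵀ)⁻¹ *ᵥ (y - A *ᵥ μ)) = Δᵀ *ᵥ (Ω⁻¹ *ᵥ (z - μ)) := by
    rw [hvec, Matrix.transpose_mul, Matrix.mulVec_mulVec, mul_assoc,
      Matrix.mul_nonsing_inv _ hAT, mul_one]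
  have hL : (1 : Matrix (Fin n) (Fin n) ℝ) - (A * Δ)ᵀ * (A * Ω * Aᵀ)⁻¹ * (A * Δ)
      = 1 - Δᵀ * Ω⁻¹ * Δ := by
    rw [hΩinv, Matrix.transpose_mul]
    have h1 : Δᵀ * Aᵀ * (Aᵀ⁻¹ * Ω⁻¹ * A⁻¹) * (A * Δ)
        = Δᵀ * (Aᵀ * Aᵀ⁻¹) * Ω⁻¹ * (A⁻¹ * A) * Δ := by noncomm_ring
    rw [h1, Matrix.mul_nonsing_inv _ hAT, Matrix.nonsing_inv_mul _ hA, mul_one, mul_one]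
  have hdet : Real.sqrt (A * Ω * Aᵀ).det = |A.det| * Real.sqrt Ω.det := by
    rw [Matrix.det_mul, Matrix.det_mul, Matrix.det_transpose,
      show A.det * Ω.det * A.det = A.det ^ 2 * Ω.det by ring,
      Real.sqrt_mul (sq_nonneg _), Real.sqrt_sq_eq_abs]
  simp only [mvstPDF, mvtPDF, hΩ', hquad, hskew, hL, hdet, ← hz]
  ring
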